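/- Fix τ₁ < τ₂, B_Θ > 0. Define for parameters (r, g) ∈ [-B_Θ, B_Θ]² the three class probabilities π₀ = 1 - Φ(z₁), π₁ = Φ(z₁) - Φ(z₂), π₂ = Φ(z₂) with z_k = (r - τ_k)e^{-g}, and similarly (π₀*, π₁*, π₂*) from (r*, g*) ∈ [-B_Θ, B_Θ]². Then there is a constant c > 0, depending only on B_Θ, τ₁, τ₂, such that KL(π* ‖ π) ≥ c·((r - r*)² + (g - g*)²). -/

import Mathlib

open MeasureTheory intervalIntegral Set

noncomputable def stdGaussianPDF (t : ℝ) : ℝ :=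
  (Real.sqrt (2 * Real.pi))⁻¹ * Real.exp (-t ^ 2 / 2)

noncomputable def stdGaussianCDF (x : ℝ) : ℝ :=
  ∫ t in Set.Iic x, stdGaussianPDF t

lemma pdf_pos (t : ℝ) : 0 < stdGaussianPDF t := by
  unfold stdGaussianPDF
  positivity

lemma pdf_eq (t : ℝ) : stdGaussianPDF t = (Real.sqrt (2 * Real.pi))⁻¹ * Real.exp (-(1/2) * t ^ 2) := by
  unfold stdGaussianPDF; ring_nf

lemma pdf_integrable : MeasureTheory.Integrable stdGaussianPDF := by
  have h := (integrable_exp_neg_mul_sq (by norm_num : (0:ℝ) < 1/2)).const_mul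
    ((Real.sqrt (2 * Real.pi))⁻¹)
  refine h.congr (Filter.Eventually.of_forall fun t => ?_)
  rw [pdf_eq]

lemma integral_pdf : ∫ t, stdGaussianPDF t = 1 := by
  have h : ∫ t, stdGaussianPDF t
      = (Real.sqrt (2 * Real.pi))⁻¹ * ∫ t : ℝ, Real.exp (-(1/2) * t ^ 2) := by
    rw [← MeasureTheory.integral_const_mul]
    exact integral_congr_ae (Filter.Eventually.of_forall fun t => pdf_eq t)
  rw [h, integral_gaussian]
  have h2 : Real.pi / (1/2) = 2 * Real.pi := by ring
  rw [h2, inv_mul_cancel₀]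
  positivity

lemma pdf_ge {M t : ℝ} (ht : |t| ≤ M) : stdGaussianPDF M ≤ stdGaussianPDF t := by
  unfold stdGaussianPDF
  have h1 : t ^ 2 ≤ M ^ 2 := by nlinarith [abs_nonneg t, neg_abs_le t, le_abs_self t]
  have h2 := Real.exp_le_exp.2 (by linarith : -M ^ 2 / 2 ≤ -t ^ 2 / 2)
  have h0 : (0:ℝ) < (Real.sqrt (2 * Real.pi))⁻¹ := by positivity
  nlinarith

lemma cdf_diff {a b : ℝ} (hab : a ≤ b) :
    stdGaussianCDF b - stdGaussianCDF a = ∫ t in Ioc a b, stdGaussianPDF t := by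
  unfold stdGaussianCDF
  rw [integral_Iic_sub_Iic pdf_integrable.integrableOn pdf_integrable.integrableOn,
    intervalIntegral.integral_of_le hab]

lemma setIntegral_pdf_ge {a b c : ℝ} (hab : a ≤ b)
    (hc : ∀ t ∈ Ioc a b, c ≤ stdGaussianPDF t) :
    c * (b - a) ≤ ∫ t in Ioc a b, stdGaussianPDF t := by
  have h := setIntegral_ge_of_const_le (μ := volume) measurableSet_Ioc
    (by simp [Real.volume_Ioc] : volume (Ioc a b) ≠ ⊤) hc pdf_integrable.integrableOn
  rw [Real.volume_real_Ioc_of_le hab, smul_eq_mul] at h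
  linarith

lemma cdf_diff_ge {M a b : ℝ} (hab : a ≤ b) (ha : |a| ≤ M) (hb : |b| ≤ M) :
    stdGaussianPDF M * (b - a) ≤ stdGaussianCDF b - stdGaussianCDF a := by
  rw [cdf_diff hab]
  refine setIntegral_pdf_ge hab fun t ht => pdf_ge (abs_le.2 ⟨?_, ?_⟩)
  · have := abs_le.1 ha; linarith [ht.1]
  · have := abs_le.1 hb; linarith [ht.2]

lemma cdf_nonneg (x : ℝ) : 0 ≤ stdGaussianCDF x :=
  setIntegral_nonneg measurableSet_Iic fun t _ => (pdf_pos t).le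

lemma one_sub_cdf {x : ℝ} : 1 - stdGaussianCDF x = ∫ t in Ioi x, stdGaussianPDF t := by
  have h := integral_Iic_add_Ioi (b := x) pdf_integrable.integrableOn pdf_integrable.integrableOn
  rw [integral_pdf] at h
  unfold stdGaussianCDF; linarith

lemma cdf_le_one (x : ℝ) : stdGaussianCDF x ≤ 1 := by
  have h2 : 0 ≤ ∫ t in Ioi x, stdGaussianPDF t :=
    setIntegral_nonneg measurableSet_Ioi fun t _ => (pdf_pos t).le
  have := one_sub_cdf (x := x)
  linarith

lemma one_sub_cdf_ge {M x : ℝ} (hx : |x| ≤ M) :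
    stdGaussianPDF (M + 1) ≤ 1 - stdGaussianCDF x := by
  rw [one_sub_cdf]
  have h1 : ∫ t in Ioc x (x+1), stdGaussianPDF t ≤ ∫ t in Ioi x, stdGaussianPDF t := by
    apply setIntegral_mono_set pdf_integrable.integrableOn
      (Filter.Eventually.of_forall fun t => (pdf_pos t).le)
    exact HasSubset.Subset.eventuallyLE Ioc_subset_Ioi_self
  have h2 : stdGaussianPDF (M+1) * (x + 1 - x) ≤ ∫ t in Ioc x (x+1), stdGaussianPDF t := by
    refine setIntegral_pdf_ge (by linarith) fun t ht => pdf_ge (abs_le.2 ⟨?_, ?_⟩)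
    · have := abs_le.1 hx; linarith [ht.1]
    · have := abs_le.1 hx; linarith [ht.2]
  calc stdGaussianPDF (M+1) = stdGaussianPDF (M+1) * (x + 1 - x) := by ring
    _ ≤ _ := h2.trans h1

lemma cdf_ge {M x : ℝ} (hx : |x| ≤ M) :
    stdGaussianPDF (M + 1) ≤ stdGaussianCDF x := by
  have h2 : stdGaussianPDF (M+1) * (x - (x-1)) ≤ ∫ t in Ioc (x-1) x, stdGaussianPDF t := by
    refine setIntegral_pdf_ge (by linarith) fun t ht => pdf_ge (abs_le.2 ⟨?_, ?_⟩)
    · have := abs_le.1 hx; linarith [ht.1]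
    · have := abs_le.1 hx; linarith [ht.2]
  have h3 := cdf_diff (by linarith : x - 1 ≤ x)
  have h4 := cdf_nonneg (x - 1)
  have h5 : stdGaussianPDF (M+1) * (x - (x-1)) = stdGaussianPDF (M+1) := by ring
  linarith [h5 ▸ h2, h3 ▸ h2]

lemma klterm {x y : ℝ} (hx : 0 < x) (hy : 0 < y) (hxy : x + y ≤ 2) :
    (x - y) ^ 2 / 4 ≤ x * Real.log (x / y) + y - x := by
  have hyx : 0 < y / x := div_pos hy hx
  have hlog : Real.log (y / x) ≤ 2 * (Real.sqrt (y / x) - 1) := by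
    have h1 := Real.log_le_sub_one_of_pos (Real.sqrt_pos.2 hyx)
    rw [Real.log_sqrt hyx.le] at h1
    linarith
  have hxy' : Real.log (x / y) = - Real.log (y / x) := by
    rw [← Real.log_inv, inv_div]
  set a := Real.sqrt x with hadef
  set b := Real.sqrt y with hbdef
  have ha : a ^ 2 = x := Real.sq_sqrt hx.le
  have hb : b ^ 2 = y := Real.sq_sqrt hy.le
  have ha0 : 0 < a := Real.sqrt_pos.2 hx
  have hb0 : 0 ≤ b := Real.sqrt_nonneg y
  have hab : x * Real.sqrt (y / x) = a * b := by
    rw [Real.sqrt_div hy.le]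
    field_simp
    nlinarith
  have h2 : 2 * x - 2 * (a * b) ≤ x * Real.log (x / y) := by
    rw [hxy']
    nlinarith [mul_le_mul_of_nonneg_left hlog hx.le]
  have e2 : (a + b) ^ 2 ≤ 4 := by nlinarith [sq_nonneg (a - b)]
  have h3 : (x - y) ^ 2 ≤ 4 * (a - b) ^ 2 := by
    have e1 : (x - y) ^ 2 = (a - b) ^ 2 * (a + b) ^ 2 := by
      rw [← ha, ← hb]; ring
    rw [e1]
    nlinarith [sq_nonneg (a - b)]
  have e3 : x + y - 2 * (a * b) = (a - b) ^ 2 := by rw [← ha, ← hb]; ring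
  nlinarith

lemma exp_sub_exp_le' {a b B : ℝ} (hb : b ≤ a) (ha : a ≤ B) :
    Real.exp a - Real.exp b ≤ Real.exp B * (a - b) := by
  have h := Real.add_one_le_exp (b - a)
  rw [Real.exp_sub] at h
  have hea := Real.exp_pos a
  have heB : Real.exp a ≤ Real.exp B := Real.exp_le_exp.2 ha
  have h2 : (b - a + 1) * Real.exp a ≤ Real.exp b := by
    rw [div_eq_mul_inv] at h
    calc (b - a + 1) * Real.exp a ≤ Real.exp b * (Real.exp a)⁻¹ * Real.exp a :=
          mul_le_mul_of_nonneg_right h hea.le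
      _ = Real.exp b := by field_simp
  nlinarith

lemma exp_sub_exp_ge' {a b B : ℝ} (hb : b ≤ a) (hB : -B ≤ b) :
    Real.exp (-B) * (a - b) ≤ Real.exp a - Real.exp b := by
  have h := Real.add_one_le_exp (a - b)
  rw [Real.exp_sub] at h
  have heb := Real.exp_pos b
  have heB : Real.exp (-B) ≤ Real.exp b := Real.exp_le_exp.2 hB
  have h2 : (a - b + 1) * Real.exp b ≤ Real.exp a := by
    rw [div_eq_mul_inv] at h
    calc (a - b + 1) * Real.exp b ≤ Real.exp a * (Real.exp b)⁻¹ * Real.exp b :=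
          mul_le_mul_of_nonneg_right h heb.le
      _ = Real.exp a := by field_simp
  nlinarith

/-- Lipschitz lower bound for exp differences with arguments in `[-B, B]`. -/
lemma exp_abs_ge {u v B : ℝ} (hu : |u| ≤ B) (hv : |v| ≤ B) :
    Real.exp (-B) * |u - v| ≤ |Real.exp u - Real.exp v| := by
  rcases le_total v u with h | h
  · have h1 := exp_sub_exp_ge' (a := u) (b := v) h (neg_le_of_abs_le hv)
    have h2 : Real.exp v ≤ Real.exp u := Real.exp_le_exp.2 h
    rw [abs_of_nonneg (by linarith : (0:ℝ) ≤ u - v), abs_of_nonneg (by linarith)]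
    exact h1
  · have h1 := exp_sub_exp_ge' (a := v) (b := u) h (neg_le_of_abs_le hu)
    have h2 : Real.exp u ≤ Real.exp v := Real.exp_le_exp.2 h
    rw [abs_sub_comm (Real.exp u) (Real.exp v), abs_sub_comm u v,
      abs_of_nonneg (by linarith : (0:ℝ) ≤ v - u), abs_of_nonneg (by linarith)]
    exact h1

lemma exp_abs_le {u v B : ℝ} (hu : |u| ≤ B) (hv : |v| ≤ B) :
    |Real.exp u - Real.exp v| ≤ Real.exp B * |u - v| := by
  rcases le_total v u with h | h
  · have h1 := exp_sub_exp_le' (a := u) (b := v) h (le_of_abs_le hu)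
    have h2 : Real.exp v ≤ Real.exp u := Real.exp_le_exp.2 h
    rw [abs_of_nonneg (by linarith : (0:ℝ) ≤ u - v), abs_of_nonneg (by linarith)]
    exact h1
  · have h1 := exp_sub_exp_le' (a := v) (b := u) h (le_of_abs_le hv)
    have h2 : Real.exp u ≤ Real.exp v := Real.exp_le_exp.2 h
    rw [abs_sub_comm (Real.exp u) (Real.exp v), abs_sub_comm u v,
      abs_of_nonneg (by linarith : (0:ℝ) ≤ v - u), abs_of_nonneg (by linarith)]
    exact h1

lemma sq_add_abs (a b : ℝ) : (|a| + |b|) ^ 2 ≤ 2 * (a ^ 2 + b ^ 2) := by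
  nlinarith [sq_abs a, sq_abs b, sq_nonneg (|a| - |b|)]

lemma inv_lip {τ₁ τ₂ B r g rs gs : ℝ} (hτ : τ₁ < τ₂) (hB : 0 < B)
    (hr : |r| ≤ B) (hg : |g| ≤ B) (hrs : |rs| ≤ B) (hgs : |gs| ≤ B) :
    (r - rs) ^ 2 + (g - gs) ^ 2 ≤
      4 * (Real.exp B + ((B + max |τ₁| |τ₂|) * Real.exp B + 1) * Real.exp B ^ 2 / (τ₂ - τ₁)) ^ 2 *
        (((r - τ₁) * Real.exp (-g) - (rs - τ₁) * Real.exp (-gs)) ^ 2 +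
         ((r - τ₂) * Real.exp (-g) - (rs - τ₂) * Real.exp (-gs)) ^ 2) := by
  set T := max |τ₁| |τ₂| with hT
  set E := Real.exp B with hE
  set δ := τ₂ - τ₁ with hδdef
  have hδ : 0 < δ := by rw [hδdef]; linarith
  set K := E + ((B + T) * E + 1) * E ^ 2 / δ with hK
  set w₁ := (r - τ₁) * Real.exp (-g) - (rs - τ₁) * Real.exp (-gs) with hw₁
  set w₂ := (r - τ₂) * Real.exp (-g) - (rs - τ₂) * Real.exp (-gs) with hw₂
  set R := |r - rs| with hR
  set G := |g - gs| with hG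
  set W := |w₁| + |w₂| with hW
  clear_value T E δ K w₁ w₂ R G W
  have hE1 : 1 ≤ E := by rw [hE]; exact Real.one_le_exp hB.le
  have hT0 : 0 ≤ T := by rw [hT]; exact le_trans (abs_nonneg τ₁) (le_max_left _ _)
  have hEpos : (0:ℝ) < E := by linarith
  have hng : |(-g)| ≤ B := by rwa [abs_neg]
  have hngs : |(-gs)| ≤ B := by rwa [abs_neg]
  have hD : w₁ - w₂ = δ * (Real.exp (-g) - Real.exp (-gs)) := by
    rw [hw₁, hw₂, hδdef]; ring
  have hA : δ * (E⁻¹ * |g - gs|) ≤ |w₁ - w₂| := by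
    have h1 := exp_abs_ge (B := B) hng hngs
    rw [Real.exp_neg, ← hE] at h1
    have h2 : |(-g) - (-gs)| = |g - gs| := by rw [abs_sub_comm]; congr 1; ring
    rw [h2] at h1
    rw [hD, abs_mul, abs_of_pos hδ]
    exact mul_le_mul_of_nonneg_left h1 hδ.le
  have hid : Real.exp (-g) * (r - rs) = w₁ - (rs - τ₁) * (Real.exp (-g) - Real.exp (-gs)) := by
    rw [hw₁]; ring
  have hrsτ : |rs - τ₁| ≤ B + T := by
    have h1 : |τ₁| ≤ T := by rw [hT]; exact le_max_left _ _
    calc |rs - τ₁| ≤ |rs| + |τ₁| := abs_sub _ _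
      _ ≤ B + T := by gcongr
  have hexpd : |Real.exp (-g) - Real.exp (-gs)| ≤ E * |g - gs| := by
    have h1 := exp_abs_le (B := B) hng hngs
    rw [← hE] at h1
    have h2 : |(-g) - (-gs)| = |g - gs| := by rw [abs_sub_comm]; congr 1; ring
    rwa [h2] at h1
  have hexpg : E⁻¹ ≤ Real.exp (-g) := by
    rw [hE, ← Real.exp_neg]
    exact Real.exp_le_exp.2 (neg_le_of_abs_le hng)
  have hB' : E⁻¹ * |r - rs| ≤ |w₁| + (B + T) * (E * |g - gs|) := by
    calc E⁻¹ * |r - rs| ≤ Real.exp (-g) * |r - rs| := by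
          apply mul_le_mul_of_nonneg_right hexpg (abs_nonneg _)
      _ = |Real.exp (-g) * (r - rs)| := by
          rw [abs_mul, abs_of_pos (Real.exp_pos _)]
      _ = |w₁ - (rs - τ₁) * (Real.exp (-g) - Real.exp (-gs))| := by rw [hid]
      _ ≤ |w₁| + |rs - τ₁| * |Real.exp (-g) - Real.exp (-gs)| := by
          rw [← abs_mul]; exact abs_sub _ _
      _ ≤ |w₁| + (B + T) * (E * |g - gs|) := by gcongr
  rw [← hG] at hA hB'
  rw [← hR] at hB'
  have hW12 : |w₁ - w₂| ≤ W := by rw [hW]; exact abs_sub _ _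
  have hw1W : |w₁| ≤ W := by rw [hW]; nlinarith [abs_nonneg w₂, abs_nonneg w₁]
  have hR0 : 0 ≤ R := by rw [hR]; exact abs_nonneg _
  have hG0 : 0 ≤ G := by rw [hG]; exact abs_nonneg _
  have hW0 : 0 ≤ W := le_trans (abs_nonneg _) hw1W
  have hWsq : W ^ 2 ≤ 2 * (w₁ ^ 2 + w₂ ^ 2) := by
    rw [hW]; exact sq_add_abs w₁ w₂
  have hsqR : R ^ 2 = (r - rs) ^ 2 := by rw [hR, sq_abs]
  have hsqG : G ^ 2 = (g - gs) ^ 2 := by rw [hG, sq_abs]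
  have hδK : δ * K = δ * E + ((B + T) * E + 1) * E ^ 2 := by
    rw [hK]; field_simp
  clear hD hid hexpd hexpg hng hngs hw₁ hw₂ hE hT hδdef hK hr hg hrs hgs hτ hrsτ hR hG hW
  have hA' : δ * G ≤ E * W := by
    have h3 : δ * (E⁻¹ * G) ≤ W := le_trans hA hW12
    have h4 := mul_le_mul_of_nonneg_left h3 hEpos.le
    have h5 : E * (δ * (E⁻¹ * G)) = δ * G := by
      field_simp
    linarith [h5 ▸ h4]
  have hB'' : R ≤ E * |w₁| + (B + T) * E ^ 2 * G := by
    have h3 := mul_le_mul_of_nonneg_left hB' hEpos.le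
    have h5 : E * (E⁻¹ * R) = R := by field_simp
    have h6 : E * (|w₁| + (B + T) * (E * G)) = E * |w₁| + (B + T) * E ^ 2 * G := by ring
    linarith [h5 ▸ h6 ▸ h3]
  have hRW : δ * R ≤ δ * K * W := by
    have h1 : δ * R ≤ δ * (E * |w₁| + (B + T) * E ^ 2 * G) :=
      mul_le_mul_of_nonneg_left hB'' hδ.le
    have h2 : δ * (E * |w₁| + (B + T) * E ^ 2 * G)
        = δ * E * |w₁| + (B + T) * E ^ 2 * (δ * G) := by ring
    have h3 : (B + T) * E ^ 2 * (δ * G) ≤ (B + T) * E ^ 2 * (E * W) :=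
      mul_le_mul_of_nonneg_left hA'
        (mul_nonneg (by linarith : (0:ℝ) ≤ B + T) (sq_nonneg E))
    have h4 : δ * E * |w₁| ≤ δ * E * W :=
      mul_le_mul_of_nonneg_left hw1W (mul_nonneg hδ.le hEpos.le)
    have h5 : δ * E * W + (B + T) * E ^ 2 * (E * W) ≤ δ * K * W := by
      have h6 : δ * K * W = (δ * E + ((B + T) * E + 1) * E ^ 2) * W := by rw [hδK]
      have h7 : 0 ≤ E ^ 2 * W := mul_nonneg (sq_nonneg E) hW0
      rw [h6]
      linarith [h7]
    linarith
  have hGW : δ * G ≤ δ * K * W := by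
    have h1 : E * W ≤ δ * K * W := by
      apply mul_le_mul_of_nonneg_right _ hW0
      have c1 : 0 ≤ δ * E := mul_nonneg hδ.le hEpos.le
      have c2 : 0 ≤ (B + T) * E * E ^ 2 :=
        mul_nonneg (mul_nonneg (by linarith : (0:ℝ) ≤ B + T) hEpos.le) (sq_nonneg E)
      have c3 : 0 ≤ E * (E - 1) := mul_nonneg hEpos.le (by linarith)
      have h6 : δ * E + ((B + T) * E + 1) * E ^ 2 ≥ E := by linarith [c1, c2, c3]
      have h7 : δ * K ≥ E := by rw [hδK]; exact h6
      have := mul_le_mul_of_nonneg_right h7 hW0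
      linarith
    linarith
  have hKW0 : 0 ≤ δ * K * W := le_trans (by positivity) hGW
  have hfin : δ ^ 2 * (R ^ 2 + G ^ 2) ≤ δ ^ 2 * (4 * K ^ 2 * (w₁ ^ 2 + w₂ ^ 2)) := by
    have h1 : (δ * R) ^ 2 ≤ (δ * K * W) ^ 2 := by
      apply sq_le_sq' _ hRW
      linarith [mul_nonneg hδ.le hR0, hKW0]
    have h2 : (δ * G) ^ 2 ≤ (δ * K * W) ^ 2 := by
      apply sq_le_sq' _ hGW
      linarith [mul_nonneg hδ.le hG0, hKW0]
    have h4 : (δ * K) ^ 2 * W ^ 2 ≤ (δ * K) ^ 2 * (2 * (w₁ ^ 2 + w₂ ^ 2)) :=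
      mul_le_mul_of_nonneg_left hWsq (sq_nonneg _)
    linarith [h1, h2, h4]
  have hsq : R ^ 2 + G ^ 2 ≤ 4 * K ^ 2 * (w₁ ^ 2 + w₂ ^ 2) :=
    le_of_mul_le_mul_left (by linarith) (pow_pos hδ 2)
  rw [← hsqR, ← hsqG]
  exact hsq

lemma cdf_sq_ge {M a b : ℝ} (ha : |a| ≤ M) (hb : |b| ≤ M) :
    stdGaussianPDF M ^ 2 * (b - a) ^ 2 ≤ (stdGaussianCDF b - stdGaussianCDF a) ^ 2 := by
  have hφ := pdf_pos M
  rcases le_total a b with h | h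
  · have h1 := cdf_diff_ge h ha hb
    have h2 : 0 ≤ stdGaussianPDF M * (b - a) := mul_nonneg hφ.le (by linarith)
    nlinarith
  · have h1 := cdf_diff_ge h hb ha
    have h2 : 0 ≤ stdGaussianPDF M * (a - b) := mul_nonneg hφ.le (by linarith)
    nlinarith

/-- The three threshold-induced class probabilities for parameters `(r, g)`. -/
noncomputable def classProb (τ₁ τ₂ r g : ℝ) : Fin 3 → ℝ
  | 0 => 1 - stdGaussianCDF ((r - τ₁) * Real.exp (-g))
  | 1 => stdGaussianCDF ((r - τ₁) * Real.exp (-g)) - stdGaussianCDF ((r - τ₂) * Real.exp (-g))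
  | 2 => stdGaussianCDF ((r - τ₂) * Real.exp (-g))

lemma classProb_zero (τ₁ τ₂ r g : ℝ) :
    classProb τ₁ τ₂ r g 0 = 1 - stdGaussianCDF ((r - τ₁) * Real.exp (-g)) := rfl

lemma classProb_one (τ₁ τ₂ r g : ℝ) :
    classProb τ₁ τ₂ r g 1 =
      stdGaussianCDF ((r - τ₁) * Real.exp (-g)) - stdGaussianCDF ((r - τ₂) * Real.exp (-g)) := rfl

lemma classProb_two (τ₁ τ₂ r g : ℝ) :
    classProb τ₁ τ₂ r g 2 = stdGaussianCDF ((r - τ₂) * Real.exp (-g)) := rfl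

theorem two_anchor_kl_curvature_lower (τ₁ τ₂ B : ℝ) (hτ : τ₁ < τ₂) (hB : 0 < B) :
    ∃ c > 0, ∀ r g rs gs : ℝ,
      |r| ≤ B → |g| ≤ B → |rs| ≤ B → |gs| ≤ B →
      (∑ ℓ, classProb τ₁ τ₂ rs gs ℓ *
          Real.log (classProb τ₁ τ₂ rs gs ℓ / classProb τ₁ τ₂ r g ℓ))
        ≥ c * ((r - rs) ^ 2 + (g - gs) ^ 2) := by
  have hT0 : (0:ℝ) ≤ max |τ₁| |τ₂| := le_trans (abs_nonneg τ₁) (le_max_left _ _)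
  have hE0 : (0:ℝ) < Real.exp B := Real.exp_pos B
  have hE1 : (1:ℝ) ≤ Real.exp B := Real.one_le_exp hB.le
  set T := max |τ₁| |τ₂| with hT
  set E := Real.exp B with hE
  set M := (B + T) * E with hM
  set δ := τ₂ - τ₁ with hδdef
  have hδ0 : 0 < δ := by rw [hδdef]; linarith
  set K := E + (M + 1) * E ^ 2 / δ with hK
  have hM0 : 0 < M := by rw [hM]; nlinarith
  have hφ0 : 0 < stdGaussianPDF M := pdf_pos M
  have hK0 : 0 < K := by
    rw [hK]
    have h1 : 0 ≤ (M + 1) * E ^ 2 / δ :=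
      div_nonneg (mul_nonneg (by linarith) (sq_nonneg E)) hδ0.le
    linarith
  refine ⟨stdGaussianPDF M ^ 2 / (16 * K ^ 2), div_pos (pow_pos hφ0 2) (by positivity), ?_⟩
  intro r g rs gs hr hg hrs hgs
  have hτ₁T : |τ₁| ≤ T := by rw [hT]; exact le_max_left _ _
  have hτ₂T : |τ₂| ≤ T := by rw [hT]; exact le_max_right _ _
  have hzb : ∀ x τ gg : ℝ, |x| ≤ B → |τ| ≤ T → |gg| ≤ B →
      |(x - τ) * Real.exp (-gg)| ≤ M := by
    intro x τ gg hx hτ' hgg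
    rw [abs_mul, Real.abs_exp, hM]
    have h1 : |x - τ| ≤ B + T := le_trans (abs_sub x τ) (by gcongr)
    have h2 : Real.exp (-gg) ≤ E := by
      rw [hE]; exact Real.exp_le_exp.2 (by linarith [abs_le.1 hgg])
    exact mul_le_mul h1 h2 (Real.exp_pos _).le (by linarith)
  have hz1 : |(r - τ₁) * Real.exp (-g)| ≤ M := hzb r τ₁ g hr hτ₁T hg
  have hz2 : |(r - τ₂) * Real.exp (-g)| ≤ M := hzb r τ₂ g hr hτ₂T hg
  have hz1s : |(rs - τ₁) * Real.exp (-gs)| ≤ M := hzb rs τ₁ gs hrs hτ₁T hgs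
  have hz2s : |(rs - τ₂) * Real.exp (-gs)| ≤ M := hzb rs τ₂ gs hrs hτ₂T hgs
  have e1 : (0:ℝ) < Real.exp (-g) := Real.exp_pos _
  have e1s : (0:ℝ) < Real.exp (-gs) := Real.exp_pos _
  have hMp1 : 0 < stdGaussianPDF (M + 1) := pdf_pos _
  rw [ge_iff_le, Fin.sum_univ_three, classProb_zero, classProb_one, classProb_two,
    classProb_zero, classProb_one, classProb_two]
  set A1 := stdGaussianCDF ((r - τ₁) * Real.exp (-g)) with hA1
  set A2 := stdGaussianCDF ((r - τ₂) * Real.exp (-g)) with hA2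
  set A1s := stdGaussianCDF ((rs - τ₁) * Real.exp (-gs)) with hA1s
  set A2s := stdGaussianCDF ((rs - τ₂) * Real.exp (-gs)) with hA2s
  -- basic bounds on the CDF values
  have hA1nn : 0 ≤ A1 := by rw [hA1]; exact cdf_nonneg _
  have hA2nn : 0 ≤ A2 := by rw [hA2]; exact cdf_nonneg _
  have hA1snn : 0 ≤ A1s := by rw [hA1s]; exact cdf_nonneg _
  have hA2snn : 0 ≤ A2s := by rw [hA2s]; exact cdf_nonneg _
  have hA1le : A1 ≤ 1 := by rw [hA1]; exact cdf_le_one _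
  have hA2le : A2 ≤ 1 := by rw [hA2]; exact cdf_le_one _
  have hA1sle : A1s ≤ 1 := by rw [hA1s]; exact cdf_le_one _
  have hA2sle : A2s ≤ 1 := by rw [hA2s]; exact cdf_le_one _
  -- positivity of all six class probabilities
  have hq0 : 0 < 1 - A1 := lt_of_lt_of_le hMp1 (by rw [hA1]; exact one_sub_cdf_ge hz1)
  have hq2 : 0 < A2 := lt_of_lt_of_le hMp1 (by rw [hA2]; exact cdf_ge hz2)
  have hq0s : 0 < 1 - A1s := lt_of_lt_of_le hMp1 (by rw [hA1s]; exact one_sub_cdf_ge hz1s)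
  have hq2s : 0 < A2s := lt_of_lt_of_le hMp1 (by rw [hA2s]; exact cdf_ge hz2s)
  have hlt : (r - τ₂) * Real.exp (-g) ≤ (r - τ₁) * Real.exp (-g) :=
    mul_le_mul_of_nonneg_right (by linarith) e1.le
  have hlts : (rs - τ₂) * Real.exp (-gs) ≤ (rs - τ₁) * Real.exp (-gs) :=
    mul_le_mul_of_nonneg_right (by linarith) e1s.le
  have hq1 : 0 < A1 - A2 := by
    have hd := cdf_diff_ge hlt hz2 hz1
    rw [← hA1, ← hA2] at hd
    have h5 : (r - τ₁) * Real.exp (-g) - (r - τ₂) * Real.exp (-g) = δ * Real.exp (-g) := by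
      rw [hδdef]; ring
    rw [h5] at hd
    have h6 : 0 < stdGaussianPDF M * (δ * Real.exp (-g)) := mul_pos hφ0 (mul_pos hδ0 e1)
    linarith
  have hq1s : 0 < A1s - A2s := by
    have hd := cdf_diff_ge hlts hz2s hz1s
    rw [← hA1s, ← hA2s] at hd
    have h5 : (rs - τ₁) * Real.exp (-gs) - (rs - τ₂) * Real.exp (-gs) = δ * Real.exp (-gs) := by
      rw [hδdef]; ring
    rw [h5] at hd
    have h6 : 0 < stdGaussianPDF M * (δ * Real.exp (-gs)) := mul_pos hφ0 (mul_pos hδ0 e1s)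
    linarith
  -- the three pointwise KL-term bounds
  have k0 := klterm hq0s hq0 (by linarith)
  have k1 := klterm hq1s hq1 (by linarith)
  have k2 := klterm hq2s hq2 (by linarith)
  -- inverse-Lipschitz bounds for the CDF
  have c1 := cdf_sq_ge hz1s hz1
  have c2 := cdf_sq_ge hz2s hz2
  rw [← hA1, ← hA1s] at c1
  rw [← hA2, ← hA2s] at c2
  -- inverse-Lipschitz bound for the two-anchor map
  have hIL := inv_lip hτ hB hr hg hrs hgs
  have hfold : Real.exp B + ((B + max |τ₁| |τ₂|) * Real.exp B + 1) * Real.exp B ^ 2 / (τ₂ - τ₁)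
      = K := by rw [hK, hM, hE, hT, hδdef]
  rw [hfold] at hIL
  set W1 := (r - τ₁) * Real.exp (-g) - (rs - τ₁) * Real.exp (-gs) with hW1
  set W2 := (r - τ₂) * Real.exp (-g) - (rs - τ₂) * Real.exp (-gs) with hW2
  -- assemble
  have hcpos : 0 ≤ stdGaussianPDF M ^ 2 / (16 * K ^ 2) := by positivity
  have step := mul_le_mul_of_nonneg_left hIL hcpos
  have key : stdGaussianPDF M ^ 2 / (16 * K ^ 2) * (4 * K ^ 2 * (W1 ^ 2 + W2 ^ 2))
      = stdGaussianPDF M ^ 2 * (W1 ^ 2 + W2 ^ 2) / 4 := by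
    field_simp
    ring
  clear_value A1 A2 A1s A2s W1 W2
  have h8 : stdGaussianPDF M ^ 2 * (W1 ^ 2 + W2 ^ 2) / 4
      ≤ ((A1 - A1s) ^ 2 + (A2 - A2s) ^ 2) / 4 := by linarith [c1, c2]
  have h9 : ((A1 - A1s) ^ 2 + (A2 - A2s) ^ 2) / 4
      ≤ (1 - A1s) * Real.log ((1 - A1s) / (1 - A1)) +
        (A1s - A2s) * Real.log ((A1s - A2s) / (A1 - A2)) +
        A2s * Real.log (A2s / A2) := by
    linarith [k0, k1, k2, sq_nonneg ((A1s - A2s) - (A1 - A2))]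
  linarith [step, key, h8, h9]
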